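/- arXiv:2505.14957 — 2 statements merged into one kernel-verified Lean document; each statement's English description precedes it below -/
import Mathlib

section
/- z_k equals the minimum, over x ∈ {0,1}^n, X ∈ ℝ^{d×n} and μ ∈ ℝ₊^n subject to ‖X_i‖₂² ≤ μ_i·x_i for all i ∈ {1,...,n} and Σ_{i=1}^n x_i = k, of (1/λ)·‖X·Aᵀ − I_d‖_F² + Σ_{i=1}^n μ_i, where X_i denotes the i-th column of X. Moreover, relaxing x ∈ {0,1}^n to x ∈ [0,1]^n in this problem, the minimum value equals ν_k^C. -/
open Matrix Finset

noncomputable section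


/-- The information matrix `∑_{i ∈ S} a_i a_iᵀ + λ I_d`. -/
def infoM (d n : ℕ) (a : Fin n → Fin d → ℝ) (lam : ℝ) (S : Finset (Fin n)) :
    Matrix (Fin d) (Fin d) ℝ :=
  (∑ i ∈ S, Matrix.vecMulVec (a i) (a i)) + lam • (1 : Matrix (Fin d) (Fin d) ℝ)

/-- `f(S) = tr((∑_{i∈S} a_i a_iᵀ + λ I_d)⁻¹)`. -/
def fS (d n : ℕ) (a : Fin n → Fin d → ℝ) (lam : ℝ) (S : Finset (Fin n)) : ℝ :=
  Matrix.trace (infoM d n a lam S)⁻¹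

/-- `z_k = min_{|S| = k} f(S)`. -/
def zk (d n : ℕ) (a : Fin n → Fin d → ℝ) (lam : ℝ) (k : ℕ) : ℝ :=
  sInf {r : ℝ | ∃ S : Finset (Fin n), S.card = k ∧ fS d n a lam S = r}

/-- The `d × n` matrix whose `i`-th column is `a_i`. -/
def Amat (d n : ℕ) (a : Fin n → Fin d → ℝ) : Matrix (Fin d) (Fin n) ℝ :=
  Matrix.of fun i j => a j i

/-- The matrix `∑_i x_i a_i a_iᵀ + λ I_d` for a fractional vector `x`. -/
def contM (d n : ℕ) (a : Fin n → Fin d → ℝ) (lam : ℝ) (x : Fin n → ℝ) :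
    Matrix (Fin d) (Fin d) ℝ :=
  (∑ i : Fin n, x i • Matrix.vecMulVec (a i) (a i)) + lam • (1 : Matrix (Fin d) (Fin d) ℝ)

/-- The continuous relaxation value `ν_k^C`. -/
def nuC (d n : ℕ) (a : Fin n → Fin d → ℝ) (lam : ℝ) (k : ℕ) : ℝ :=
  sInf {r : ℝ | ∃ x : Fin n → ℝ, (∀ i, 0 ≤ x i ∧ x i ≤ 1) ∧ (∑ i, x i) = (k : ℝ) ∧
    Matrix.trace (contM d n a lam x)⁻¹ = r}

/-- The squared Frobenius norm `‖M‖_F²`. -/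
def fro2 {m p : ℕ} (M : Matrix (Fin m) (Fin p) ℝ) : ℝ := ∑ i, ∑ j, (M i j) ^ 2

end


section
variable {d n : ℕ} (a : Fin n → Fin d → ℝ) (lam : ℝ) (x : Fin n → ℝ)

lemma vvmulVec (u v y : Fin d → ℝ) : vecMulVec u v *ᵥ y = (v ⬝ᵥ y) • u := by
  ext p
  simp only [mulVec, dotProduct, vecMulVec_apply, Pi.smul_apply, smul_eq_mul, Finset.sum_mul]
  exact Finset.sum_congr rfl fun q _ => by ring

lemma sum_mulVec' {N : ℕ} (f : Fin N → Matrix (Fin d) (Fin d) ℝ) (y : Fin d → ℝ) :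
    (∑ i, f i) *ᵥ y = ∑ i, f i *ᵥ y := by
  ext p
  simp only [mulVec, dotProduct, Matrix.sum_apply, Finset.sum_mul, Finset.sum_apply]
  exact Finset.sum_comm

lemma dp_sum {N : ℕ} (u : Fin d → ℝ) (f : Fin N → Fin d → ℝ) :
    u ⬝ᵥ (∑ i, f i) = ∑ i, u ⬝ᵥ f i := by
  simp only [dotProduct, Finset.sum_apply, Finset.mul_sum]
  exact Finset.sum_comm

lemma quadform (y : Fin d → ℝ) :
    y ⬝ᵥ (contM d n a lam x *ᵥ y) = (∑ i, x i * (a i ⬝ᵥ y)^2) + lam * (y ⬝ᵥ y) := by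
  rw [contM, add_mulVec, dotProduct_add, sum_mulVec', dp_sum]
  congr 1
  · refine Finset.sum_congr rfl fun i _ => ?_
    rw [smul_mulVec, vvmulVec, dotProduct_smul, dotProduct_smul, smul_eq_mul, smul_eq_mul]
    rw [dotProduct_comm y (a i), sq]
  · rw [smul_mulVec, one_mulVec, dotProduct_smul, smul_eq_mul]

lemma contM_transpose : (contM d n a lam x)ᵀ = contM d n a lam x := by
  unfold contM
  rw [transpose_add, transpose_smul, transpose_one, transpose_sum]
  congr 1
  refine Finset.sum_congr rfl fun i _ => ?_
  rw [transpose_smul]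
  congr 1
  ext p q
  simp [vecMulVec_apply, mul_comm]

lemma contM_posDef (hlam : 0 < lam) (hx : ∀ i, 0 ≤ x i) : (contM d n a lam x).PosDef := by
  rw [posDef_iff_dotProduct_mulVec]
  constructor
  · show _ᴴ = _
    rw [conjTranspose_eq_transpose_of_trivial, contM_transpose]
  · intro y hy
    have hsy : star y = y := by simp
    rw [hsy, quadform]
    have h1 : 0 ≤ ∑ i, x i * (a i ⬝ᵥ y)^2 :=
      Finset.sum_nonneg fun i _ => mul_nonneg (hx i) (sq_nonneg _)
    have h2 : 0 < y ⬝ᵥ y := by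
      have hyy : y ⬝ᵥ y = ∑ p, y p ^ 2 := by simp [dotProduct, sq]
      obtain ⟨p, hp⟩ := Function.ne_iff.mp hy
      rw [hyy]
      exact Finset.sum_pos' (fun q _ => sq_nonneg _) ⟨p, Finset.mem_univ p, (sq_nonneg _).lt_of_ne (Ne.symm (pow_ne_zero 2 hp))⟩
    have := mul_pos hlam h2
    linarith
end

section
variable {d n : ℕ} (a : Fin n → Fin d → ℝ) (lam : ℝ) (x : Fin n → ℝ)

lemma fro2_trace (M : Matrix (Fin d) (Fin d) ℝ) : fro2 M = trace (M * Mᵀ) := by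
  simp [fro2, Matrix.trace, Matrix.diag, mul_apply, sq]

lemma trace_vv (v : Fin d → ℝ) : trace (vecMulVec v v) = ∑ p, (v p)^2 := by
  simp [Matrix.trace, Matrix.diag, vecMulVec_apply, sq]

lemma BvvB (B : Matrix (Fin d) (Fin d) ℝ) (u : Fin d → ℝ) :
    B * vecMulVec u u * Bᵀ = vecMulVec (B *ᵥ u) (B *ᵥ u) := by
  ext p q
  simp only [mul_apply, vecMulVec_apply, mulVec, dotProduct, transpose_apply,
    Finset.sum_mul, Finset.mul_sum]
  refine Finset.sum_congr rfl fun s _ => Finset.sum_congr rfl fun r _ => by ring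

lemma keyId (B : Matrix (Fin d) (Fin d) ℝ) (hBM : B * contM d n a lam x = 1) :
    ∑ i, x i * (∑ p, ((B *ᵥ a i) p)^2) = trace B - lam * fro2 B := by
  have h1 : ∀ i : Fin n, (∑ p, ((B *ᵥ a i) p)^2)
      = trace (B * vecMulVec (a i) (a i) * Bᵀ) := fun i => by rw [BvvB, trace_vv]
  have h2 : ∑ i, x i * (∑ p, ((B *ᵥ a i) p)^2)
      = trace (B * (∑ i, x i • vecMulVec (a i) (a i)) * Bᵀ) := by
    rw [Matrix.mul_sum, Matrix.sum_mul, trace_sum]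
    refine Finset.sum_congr rfl fun i _ => ?_
    rw [h1 i, mul_smul_comm, smul_mul_assoc, trace_smul, smul_eq_mul]
  have h3 : (∑ i, x i • vecMulVec (a i) (a i))
      = contM d n a lam x - lam • (1 : Matrix (Fin d) (Fin d) ℝ) := by
    rw [contM]; exact (add_sub_cancel_right _ _).symm
  rw [h2, h3, Matrix.mul_sub, hBM, Matrix.mul_smul, Matrix.mul_one, Matrix.sub_mul,
    Matrix.one_mul, Matrix.smul_mul, trace_sub, trace_smul, trace_transpose,
    smul_eq_mul, fro2_trace]
end

section
variable {d n : ℕ} (a : Fin n → Fin d → ℝ) (lam : ℝ) (x : Fin n → ℝ)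

lemma ADA : Amat d n a * diagonal x * (Amat d n a)ᵀ = ∑ i, x i • vecMulVec (a i) (a i) := by
  ext p q
  simp only [mul_apply, Amat, transpose_apply, Matrix.sum_apply, vecMulVec_apply,
    Matrix.smul_apply, smul_eq_mul, Matrix.of_apply, Matrix.diagonal_apply,
    Finset.sum_mul, mul_ite, ite_mul, mul_zero, zero_mul]
  simp only [Finset.sum_ite_eq, Finset.sum_ite_eq', Finset.mem_univ, if_true]
  exact Finset.sum_congr rfl fun i _ => by ring

lemma achieve (hlam : 0 < lam) (hx : ∀ i, 0 ≤ x i) :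
    ∃ X : Matrix (Fin d) (Fin n) ℝ, ∃ mu : Fin n → ℝ, (∀ i, 0 ≤ mu i) ∧
      (∀ i, (∑ j, (X j i)^2) ≤ mu i * x i) ∧
      (1 / lam) * fro2 (X * (Amat d n a)ᵀ - 1) + (∑ i, mu i)
        = trace (contM d n a lam x)⁻¹ := by
  set M := contM d n a lam x with hM
  have hpd := contM_posDef a lam x hlam hx
  have hdet : IsUnit M.det := hpd.det_pos.ne'.isUnit
  have hBM : M⁻¹ * M = 1 := nonsing_inv_mul M hdet
  refine ⟨M⁻¹ * Amat d n a * diagonal x, fun i => x i * ∑ p, ((M⁻¹ *ᵥ a i) p)^2, ?_, ?_, ?_⟩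
  · intro i; exact mul_nonneg (hx i) (Finset.sum_nonneg fun p _ => sq_nonneg _)
  · intro i
    have hXji : ∀ j, (M⁻¹ * Amat d n a * diagonal x) j i = x i * (M⁻¹ *ᵥ a i) j := by
      intro j
      rw [Matrix.mul_diagonal, mul_apply]
      simp only [Amat, Matrix.of_apply, mulVec, dotProduct]
      rw [Finset.mul_sum, Finset.sum_mul]
      exact Finset.sum_congr rfl fun q _ => by ring
    refine le_of_eq ?_
    simp_rw [hXji, mul_pow]
    rw [← Finset.mul_sum]
    ring
  · have hgrp : M⁻¹ * Amat d n a * diagonal x * (Amat d n a)ᵀ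
        = M⁻¹ * (Amat d n a * diagonal x * (Amat d n a)ᵀ) := by
      rw [Matrix.mul_assoc, Matrix.mul_assoc, Matrix.mul_assoc]
    have hMdecomp : (∑ i, x i • vecMulVec (a i) (a i))
        = M - lam • (1 : Matrix (Fin d) (Fin d) ℝ) := by
      rw [hM, contM]; exact (add_sub_cancel_right _ _).symm
    have hXA : M⁻¹ * Amat d n a * diagonal x * (Amat d n a)ᵀ = 1 - lam • M⁻¹ := by
      rw [hgrp, ADA, hMdecomp, Matrix.mul_sub, hBM, Matrix.mul_smul, Matrix.mul_one]
    have hfro : fro2 (M⁻¹ * Amat d n a * diagonal x * (Amat d n a)ᵀ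
        - (1 : Matrix (Fin d) (Fin d) ℝ)) = lam^2 * fro2 M⁻¹ := by
      rw [hXA]
      have : (1 : Matrix (Fin d) (Fin d) ℝ) - lam • M⁻¹ - 1 = -(lam • M⁻¹) := by abel
      rw [this]
      simp only [fro2, Matrix.neg_apply, Matrix.smul_apply, smul_eq_mul, neg_sq, mul_pow]
      simp_rw [Finset.mul_sum]
    have hkey := keyId a lam x M⁻¹ hBM
    rw [hfro, hkey]
    field_simp
    ring

lemma lowerB (hlam : 0 < lam) (hx : ∀ i, 0 ≤ x i) (X : Matrix (Fin d) (Fin n) ℝ)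
    (mu : Fin n → ℝ) (hmu : ∀ i, 0 ≤ mu i)
    (hcon : ∀ i, (∑ j, (X j i)^2) ≤ mu i * x i) :
    trace (contM d n a lam x)⁻¹
      ≤ (1 / lam) * fro2 (X * (Amat d n a)ᵀ - 1) + ∑ i, mu i := by
  set M := contM d n a lam x with hM
  have hpd := contM_posDef a lam x hlam hx
  have hdet : IsUnit M.det := hpd.det_pos.ne'.isUnit
  have hBM : M⁻¹ * M = 1 := nonsing_inv_mul M hdet
  set B := M⁻¹ with hB
  set Y := X * (Amat d n a)ᵀ - 1 with hY
  set v : Fin n → Fin d → ℝ := fun i => B *ᵥ a i with hv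
  -- step 1 : per-index inequality
  have step1 : ∀ i, 2 * (∑ p, v i p * X p i) - x i * (∑ p, (v i p)^2) ≤ mu i := by
    intro i
    set T := ∑ p, v i p * X p i with hT
    set S := ∑ p, (v i p)^2 with hS
    have hSnn : 0 ≤ S := Finset.sum_nonneg fun p _ => sq_nonneg _
    have hcs : T^2 ≤ S * (∑ p, (X p i)^2) := by
      have := Finset.sum_mul_sq_le_sq_mul_sq Finset.univ (v i) (fun p => X p i)
      simpa [hT, hS] using this
    have h5 : T^2 ≤ (x i * S) * mu i := by
      have h6 : S * (∑ p, (X p i)^2) ≤ S * (mu i * x i) :=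
        mul_le_mul_of_nonneg_left (hcon i) hSnn
      nlinarith [hcs, h6]
    have ha : 0 ≤ x i * S := mul_nonneg (hx i) hSnn
    have h6 : 2 * T ≤ 2 * (Real.sqrt (x i * S) * Real.sqrt (mu i)) := by
      have l1 : T ≤ Real.sqrt (T^2) := by
        rw [Real.sqrt_sq_eq_abs]; exact le_abs_self T
      have l2 : Real.sqrt (T^2) ≤ Real.sqrt ((x i * S) * mu i) := Real.sqrt_le_sqrt h5
      rw [Real.sqrt_mul ha] at l2
      linarith
    have h7 := sq_nonneg (Real.sqrt (x i * S) - Real.sqrt (mu i))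
    rw [sub_sq, Real.sq_sqrt ha, Real.sq_sqrt (hmu i)] at h7
    nlinarith [h6, h7]
  -- E1
  have hE1 : (∑ p, ∑ q, Y p q * B p q)
      = (∑ i, ∑ p, v i p * X p i) - trace B := by
    have l1 : (∑ p, ∑ q, Y p q * B p q) = trace (Y * Bᵀ) := by
      simp [Matrix.trace, Matrix.diag, mul_apply, transpose_apply]
    have l2 : trace (Y * Bᵀ) = trace (X * (Amat d n a)ᵀ * Bᵀ) - trace B := by
      rw [hY, Matrix.sub_mul, Matrix.one_mul, trace_sub, trace_transpose]
    have l3 : trace (X * (Amat d n a)ᵀ * Bᵀ) = ∑ i, ∑ p, v i p * X p i := by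
      rw [Matrix.mul_assoc, trace_mul_comm]
      simp only [Matrix.trace, Matrix.diag, mul_apply, transpose_apply, Amat,
        Matrix.of_apply, hv, mulVec, dotProduct]
      refine Finset.sum_congr rfl fun i _ => Finset.sum_congr rfl fun p _ => ?_
      congr 1
      exact Finset.sum_congr rfl fun q _ => mul_comm _ _
    rw [l1, l2, l3]
  have hE2 := keyId a lam x B hBM
  set C := ∑ p, ∑ q, Y p q * B p q with hC
  -- E3
  have hexp : fro2 (Y + lam • B) = fro2 Y + 2*lam*C + lam^2 * fro2 B := by
    have l4 : ∀ p q, (Y p q + lam * B p q)^2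
        = Y p q^2 + 2*lam*(Y p q * B p q) + lam^2 * B p q^2 := fun p q => by ring
    simp only [fro2, Matrix.add_apply, Matrix.smul_apply, smul_eq_mul, l4,
      Finset.sum_add_distrib]
    simp_rw [hC, Finset.mul_sum]
  have hE3 : 0 ≤ fro2 (Y + lam • B) :=
    Finset.sum_nonneg fun p _ => Finset.sum_nonneg fun q _ => sq_nonneg _
  have hsum1 : (∑ i, (2 * (∑ p, v i p * X p i) - x i * (∑ p, (v i p)^2))) ≤ ∑ i, mu i :=
    Finset.sum_le_sum fun i _ => step1 i
  have hsplit : (∑ i, (2 * (∑ p, v i p * X p i) - x i * (∑ p, (v i p)^2)))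
      = 2 * (∑ i, ∑ p, v i p * X p i) - ∑ i, x i * (∑ p, (v i p)^2) := by
    rw [Finset.sum_sub_distrib, Finset.mul_sum]
  have h8 : 0 ≤ (1/lam) * (fro2 Y + 2*lam*C + lam^2 * fro2 B) := by
    rw [← hexp]; exact mul_nonneg (by positivity) hE3
  have h9 : (1/lam) * (fro2 Y + 2*lam*C + lam^2 * fro2 B)
      = (1/lam) * fro2 Y + 2*C + lam * fro2 B := by
    field_simp
  rw [hsplit, hE2] at hsum1
  rw [h9] at h8
  linarith [hsum1, h8, hE1]
end

section
variable {d n : ℕ} (a : Fin n → Fin d → ℝ) (lam : ℝ) (x : Fin n → ℝ)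

lemma posdef_diag_pos {M : Matrix (Fin d) (Fin d) ℝ} (h : M.PosDef) (i : Fin d) :
    0 < M i i := by
  have hne : (Pi.single i 1 : Fin d → ℝ) ≠ 0 := by
    intro hc
    have := congrFun hc i
    simp at this
  have := h.dotProduct_mulVec_pos hne
  simpa [dotProduct, mulVec, Pi.single_apply, Finset.sum_ite_eq, Finset.sum_ite_eq'] using this

lemma trace_inv_nonneg (hlam : 0 < lam) (hx : ∀ i, 0 ≤ x i) :
    0 ≤ trace (contM d n a lam x)⁻¹ := by
  have hpd := (contM_posDef a lam x hlam hx).inv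
  exact Finset.sum_nonneg fun i _ => (posdef_diag_pos hpd i).le
end

section
variable {d n : ℕ} (a : Fin n → Fin d → ℝ) (lam : ℝ)

lemma contM_indicator (S : Finset (Fin n)) :
    contM d n a lam (fun i => if i ∈ S then 1 else 0) = infoM d n a lam S := by
  unfold contM infoM
  congr 1
  have h : ∀ i : Fin n, ((if i ∈ S then (1:ℝ) else 0) • Matrix.vecMulVec (a i) (a i))
      = if i ∈ S then Matrix.vecMulVec (a i) (a i) else 0 := by
    intro i; split <;> simp
  simp_rw [h]
  rw [Finset.sum_ite_mem, Finset.univ_inter]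

lemma sum_indicator (S : Finset (Fin n)) :
    (∑ i : Fin n, (if i ∈ S then (1:ℝ) else 0)) = S.card := by
  rw [Finset.sum_ite_mem, Finset.univ_inter, Finset.sum_const]
  simp
end


theorem stmt7 (d n : ℕ) (hd : 1 ≤ d) (hdn : d ≤ n)
    (a : Fin n → Fin d → ℝ) (lam : ℝ) (hlam : 0 < lam)
    (k : ℕ) (hk1 : 1 ≤ k) (hkn : k ≤ n) :
    zk d n a lam k =
      sInf {r : ℝ | ∃ x : Fin n → ℝ, ∃ X : Matrix (Fin d) (Fin n) ℝ, ∃ mu : Fin n → ℝ,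
        (∀ i, x i = 0 ∨ x i = 1) ∧ (∀ i, 0 ≤ mu i) ∧
        (∀ i, (∑ j, (X j i) ^ 2) ≤ mu i * x i) ∧ (∑ i, x i) = (k : ℝ) ∧
        (1 / lam) * fro2 (X * (Amat d n a)ᵀ - (1 : Matrix (Fin d) (Fin d) ℝ)) +
          (∑ i, mu i) = r} ∧
    nuC d n a lam k =
      sInf {r : ℝ | ∃ x : Fin n → ℝ, ∃ X : Matrix (Fin d) (Fin n) ℝ, ∃ mu : Fin n → ℝ,
        (∀ i, 0 ≤ x i ∧ x i ≤ 1) ∧ (∀ i, 0 ≤ mu i) ∧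
        (∀ i, (∑ j, (X j i) ^ 2) ≤ mu i * x i) ∧ (∑ i, x i) = (k : ℝ) ∧
        (1 / lam) * fro2 (X * (Amat d n a)ᵀ - (1 : Matrix (Fin d) (Fin d) ℝ)) +
          (∑ i, mu i) = r} := by
  classical
  have hn0 : 0 < n := lt_of_lt_of_le hk1 hkn
  -- a finset of card k
  obtain ⟨S0, _, hS0⟩ := Finset.exists_subset_card_eq (s := (Finset.univ : Finset (Fin n)))
    (by simpa using hkn)
  -- basic bounds for the zk set
  have hzkbdd : BddBelow {r : ℝ | ∃ S : Finset (Fin n), S.card = k ∧ fS d n a lam S = r} := by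
    refine ⟨0, ?_⟩
    rintro r ⟨S, hc, rfl⟩
    have : fS d n a lam S = trace (contM d n a lam (fun i => if i ∈ S then 1 else 0))⁻¹ := by
      rw [fS, contM_indicator]
    rw [this]
    exact trace_inv_nonneg a lam _ hlam (fun i => by split <;> norm_num)
  have hzkne : Set.Nonempty {r : ℝ | ∃ S : Finset (Fin n), S.card = k ∧ fS d n a lam S = r} :=
    ⟨fS d n a lam S0, S0, hS0, rfl⟩
  -- generic lower bound 0 for the optimization sets
  have hval0 : ∀ (X : Matrix (Fin d) (Fin n) ℝ) (mu : Fin n → ℝ), (∀ i, 0 ≤ mu i) →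
      0 ≤ (1 / lam) * fro2 (X * (Amat d n a)ᵀ - (1 : Matrix (Fin d) (Fin d) ℝ)) +
        (∑ i, mu i) := by
    intro X mu hmu
    have h1 : 0 ≤ fro2 (X * (Amat d n a)ᵀ - (1 : Matrix (Fin d) (Fin d) ℝ)) :=
      Finset.sum_nonneg fun p _ => Finset.sum_nonneg fun q _ => sq_nonneg _
    have h2 : 0 ≤ ∑ i, mu i := Finset.sum_nonneg fun i _ => hmu i
    have h3 : 0 ≤ 1 / lam := by positivity
    nlinarith
  constructor
  · -- binary case
    set T := {r : ℝ | ∃ x : Fin n → ℝ, ∃ X : Matrix (Fin d) (Fin n) ℝ, ∃ mu : Fin n → ℝ,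
        (∀ i, x i = 0 ∨ x i = 1) ∧ (∀ i, 0 ≤ mu i) ∧
        (∀ i, (∑ j, (X j i) ^ 2) ≤ mu i * x i) ∧ (∑ i, x i) = (k : ℝ) ∧
        (1 / lam) * fro2 (X * (Amat d n a)ᵀ - (1 : Matrix (Fin d) (Fin d) ℝ)) +
          (∑ i, mu i) = r} with hT
    have hmem : ∀ S : Finset (Fin n), S.card = k → fS d n a lam S ∈ T := by
      intro S hc
      set x : Fin n → ℝ := fun i => if i ∈ S then 1 else 0 with hxdef
      have hx0 : ∀ i, 0 ≤ x i := fun i => by simp only [hxdef]; split <;> norm_num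
      obtain ⟨X, mu, hmu, hcon, hval⟩ := achieve a lam x hlam hx0
      refine ⟨x, X, mu, fun i => by simp only [hxdef]; split <;> simp, hmu, hcon, ?_, ?_⟩
      · rw [hxdef, sum_indicator, hc]
      · rw [hval, hxdef, contM_indicator]; rfl
    have hT1ne : T.Nonempty := ⟨fS d n a lam S0, hmem S0 hS0⟩
    have hT1bdd : BddBelow T := by
      refine ⟨0, ?_⟩
      rintro r ⟨x, X, mu, _, hmu, _, _, rfl⟩
      exact hval0 X mu hmu
    refine le_antisymm (le_csInf hT1ne ?_) (le_csInf hzkne ?_)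
    · rintro r ⟨x, X, mu, hxb, hmu, hcon, hsum, rfl⟩
      have hx0 : ∀ i, 0 ≤ x i := fun i => by rcases hxb i with h | h <;> simp [h]
      set S : Finset (Fin n) := Finset.univ.filter (fun i => x i = 1) with hSdef
      have hxind : x = fun i => if i ∈ S then 1 else 0 := by
        funext i
        rcases hxb i with h | h <;> simp [hSdef, h]
      have hcard : S.card = k := by
        have h1 := hsum
        rw [hxind, sum_indicator] at h1
        exact_mod_cast h1
      have hlow := lowerB a lam x hlam hx0 X mu hmu hcon
      have hfSeq : fS d n a lam S = trace (contM d n a lam x)⁻¹ := by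
        rw [fS, ← contM_indicator, ← hxind]
      have hzk_le : zk d n a lam k ≤ fS d n a lam S := csInf_le hzkbdd ⟨S, hcard, rfl⟩
      rw [hfSeq] at hzk_le
      exact hzk_le.trans hlow
    · rintro r ⟨S, hc, rfl⟩
      exact csInf_le hT1bdd (hmem S hc)
  · -- fractional case
    set T := {r : ℝ | ∃ x : Fin n → ℝ, ∃ X : Matrix (Fin d) (Fin n) ℝ, ∃ mu : Fin n → ℝ,
        (∀ i, 0 ≤ x i ∧ x i ≤ 1) ∧ (∀ i, 0 ≤ mu i) ∧
        (∀ i, (∑ j, (X j i) ^ 2) ≤ mu i * x i) ∧ (∑ i, x i) = (k : ℝ) ∧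
        (1 / lam) * fro2 (X * (Amat d n a)ᵀ - (1 : Matrix (Fin d) (Fin d) ℝ)) +
          (∑ i, mu i) = r} with hT
    have hmem : ∀ x : Fin n → ℝ, (∀ i, 0 ≤ x i ∧ x i ≤ 1) → (∑ i, x i) = (k : ℝ) →
        trace (contM d n a lam x)⁻¹ ∈ T := by
      intro x hx01 hsum
      obtain ⟨X, mu, hmu, hcon, hval⟩ := achieve a lam x hlam (fun i => (hx01 i).1)
      exact ⟨x, X, mu, hx01, hmu, hcon, hsum, hval⟩
    have hx0prop : ∀ i : Fin n, 0 ≤ (k : ℝ) / n ∧ (k : ℝ) / n ≤ 1 := by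
      intro i
      constructor
      · positivity
      · rw [div_le_one (by exact_mod_cast hn0)]
        exact_mod_cast hkn
    have hx0sum : (∑ _i : Fin n, (k : ℝ) / n) = (k : ℝ) := by
      rw [Finset.sum_const, Finset.card_univ, Fintype.card_fin, nsmul_eq_mul]
      field_simp
    have hnune : Set.Nonempty {r : ℝ | ∃ x : Fin n → ℝ, (∀ i, 0 ≤ x i ∧ x i ≤ 1) ∧
        (∑ i, x i) = (k : ℝ) ∧ Matrix.trace (contM d n a lam x)⁻¹ = r} :=
      ⟨_, (fun _ => (k : ℝ) / n), hx0prop, hx0sum, rfl⟩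
    have hnubdd : BddBelow {r : ℝ | ∃ x : Fin n → ℝ, (∀ i, 0 ≤ x i ∧ x i ≤ 1) ∧
        (∑ i, x i) = (k : ℝ) ∧ Matrix.trace (contM d n a lam x)⁻¹ = r} := by
      refine ⟨0, ?_⟩
      rintro r ⟨x, hx01, _, rfl⟩
      exact trace_inv_nonneg a lam x hlam (fun i => (hx01 i).1)
    have hT2ne : T.Nonempty :=
      ⟨_, hmem (fun _ => (k : ℝ) / n) hx0prop hx0sum⟩
    have hT2bdd : BddBelow T := by
      refine ⟨0, ?_⟩
      rintro r ⟨x, X, mu, _, hmu, _, _, rfl⟩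
      exact hval0 X mu hmu
    refine le_antisymm (le_csInf hT2ne ?_) (le_csInf hnune ?_)
    · rintro r ⟨x, X, mu, hx01, hmu, hcon, hsum, rfl⟩
      have hnu_le : nuC d n a lam k ≤ trace (contM d n a lam x)⁻¹ :=
        csInf_le hnubdd ⟨x, hx01, hsum, rfl⟩
      exact hnu_le.trans (lowerB a lam x hlam (fun i => (hx01 i).1) X mu hmu hcon)
    · rintro r ⟨x, hx01, hsum, rfl⟩
      exact csInf_le hT2bdd (hmem x hx01 hsum)
end

section
/- The relaxation values satisfy: (i) ν_k^N = ν_k^C for every k with d ≤ k ≤ n; and (ii) ν_k^N ≥ ν_k^C for every k with 1 ≤ k ≤ d−1. -/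
open Matrix Finset

noncomputable section


open Classical in
/-- The eigenvalues of a symmetric matrix, listed in decreasing order with multiplicity
(and junk value `0` if the matrix is not symmetric). -/
def eigsDesc {d : ℕ} (X : Matrix (Fin d) (Fin d) ℝ) : Fin d → ℝ :=
  if h : X.IsHermitian then (fun i => (h.eigenvalues ∘ Tuple.sort h.eigenvalues) i.rev)
  else fun _ => 0

/-- `idxVal σ j` is `σ_{j+1}` in one-based indexing (junk value `0` out of range). -/
def idxVal {m : ℕ} (σ : Fin m → ℝ) (j : ℕ) : ℝ := if h : j < m then σ ⟨j, h⟩ else 0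

/-- `Σ_{i = η+1}^{m} σ_i` in one-based indexing. -/
def tailSum (m : ℕ) (σ : Fin m → ℝ) (η : ℕ) : ℝ :=
  ∑ i ∈ Finset.univ.filter (fun i : Fin m => η ≤ (i : ℕ)), σ i

/-- `η` is an integer with `0 ≤ η ≤ k-1` such that
`σ_η > (1/(k-η)) Σ_{i=η+1}^{m} σ_i ≥ σ_{η+1}` (one-based indexing, convention `σ_0 = ∞`). -/
def isEnvIdx (m k : ℕ) (σ : Fin m → ℝ) (η : ℕ) : Prop :=
  η < k ∧ η < m ∧
  (η = 0 ∨ tailSum m σ η / ((k : ℝ) - η) < idxVal σ (η - 1)) ∧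
  idxVal σ η ≤ tailSum m σ η / ((k : ℝ) - η)

/-- `Σ_{i=1}^{η} 1/(σ_i + λ) + (k-η)² / (Σ_{i=η+1}^{m} σ_i + (k-η)λ)`. -/
def envVal (m k : ℕ) (lam : ℝ) (σ : Fin m → ℝ) (η : ℕ) : ℝ :=
  (∑ i ∈ Finset.univ.filter (fun i : Fin m => (i : ℕ) < η), 1 / (σ i + lam)) +
    ((k : ℝ) - η) ^ 2 / (tailSum m σ η + ((k : ℝ) - η) * lam)

open Classical in
/-- The function `G(X; λ)` (the convex envelope of `Γ(·;λ)`), defined via the unique index `η`;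
with `lam = 0`, `d = n` and `kt = k`, this is the function `Φ`. -/
def Gfun (d kt : ℕ) (lam : ℝ) (X : Matrix (Fin d) (Fin d) ℝ) : ℝ :=
  if h : ∃ η, isEnvIdx d kt (eigsDesc X) η then envVal d kt lam (eigsDesc X) h.choose
  else 0

/-- The relaxation value `ν_k^N`. -/
def nuN (d n : ℕ) (a : Fin n → Fin d → ℝ) (lam : ℝ) (k : ℕ) : ℝ :=
  sInf {r : ℝ | ∃ x : Fin n → ℝ, (∀ i, 0 ≤ x i ∧ x i ≤ 1) ∧ (∑ i, x i) = (k : ℝ) ∧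
    Gfun d (min k d) lam (∑ i : Fin n, x i • Matrix.vecMulVec (a i) (a i)) +
      ((d : ℝ) - (min k d : ℕ)) / lam = r}

end



section AuxProof15











lemma chord {lam σ p t : ℝ} (hlam : 0 < lam) (hσ : 0 ≤ σ) (hp : 0 < p) (hpt : p * σ ≤ t) :
    1 / (σ + lam) ≤ 1 / lam - σ * p / (lam * (t + p * lam)) := by
  have h1 : 0 < σ + lam := by linarith
  have h2 : 0 < t + p * lam := by nlinarith
  have key : 1/lam - σ*p/(lam*(t+p*lam)) - 1/(σ+lam) = σ*(t - p*σ) / (lam*(t+p*lam)*(σ+lam)) := by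
    have h2' : t + p * lam ≠ 0 := ne_of_gt h2
    have h2'' : lam ≠ 0 := ne_of_gt hlam
    field_simp
    have hx : (p*lam+t) * (p*lam+t)⁻¹ = 1 := mul_inv_cancel₀ (by linarith)
    linear_combination (-σ) * hx
  have h3 : 0 ≤ σ*(t - p*σ) / (lam*(t+p*lam)*(σ+lam)) :=
    div_nonneg (mul_nonneg hσ (by linarith)) (by positivity)
  linarith

lemma tailSum_succ {m : ℕ} (σ : Fin m → ℝ) {j : ℕ} (hj : j < m) :
    tailSum m σ j = σ ⟨j, hj⟩ + tailSum m σ (j+1) := by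
  unfold tailSum
  have h : Finset.univ.filter (fun i : Fin m => j ≤ (i:ℕ)) =
      insert ⟨j, hj⟩ (Finset.univ.filter (fun i : Fin m => j+1 ≤ (i:ℕ))) := by
    ext i; simp only [Finset.mem_filter, Finset.mem_univ, true_and, Finset.mem_insert,
      Fin.ext_iff]
    omega
  rw [h, Finset.sum_insert (by simp)]

lemma card_tail_filter (m η : ℕ) :
    (Finset.univ.filter (fun i : Fin m => η ≤ (i:ℕ))).card = m - η := by
  rw [Finset.card_filter, Fin.sum_univ_eq_sum_range (fun i => if η ≤ i then (1:ℕ) else 0),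
    ← Finset.card_filter]
  have h : (Finset.range m).filter (fun i => η ≤ i) = Finset.Ico η m := by
    ext i; simp [Finset.mem_Ico]; omega
  rw [h, Nat.card_Ico]

lemma tailSum_nonneg {m : ℕ} {σ : Fin m → ℝ} (hnn : ∀ i, 0 ≤ σ i) (η : ℕ) :
    0 ≤ tailSum m σ η :=
  Finset.sum_nonneg fun i _ => hnn i

lemma exists_envIdx {m k : ℕ} (hk : 1 ≤ k) (hkm : k ≤ m) (σ : Fin m → ℝ) (hnn : ∀ i, 0 ≤ σ i) :
    ∃ η, isEnvIdx m k σ η := by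
  have hP : ∃ j, j < k ∧ ((k:ℝ) - j) * idxVal σ j ≤ tailSum m σ j := by
    have hjm : k - 1 < m := by omega
    refine ⟨k-1, by omega, ?_⟩
    have hts := tailSum_succ σ hjm
    rw [show k - 1 + 1 = k from by omega] at hts
    rw [idxVal, dif_pos hjm, hts]
    have h1 : ((k:ℝ) - (k-1:ℕ)) = 1 := by
      push_cast [Nat.cast_sub hk]; ring
    rw [h1, one_mul]
    have := tailSum_nonneg hnn (m := m) (σ := σ) k
    linarith
  classical
  set η := Nat.find hP with hηdef
  obtain ⟨hηk, hQ⟩ := Nat.find_spec hP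
  have hηm : η < m := lt_of_lt_of_le hηk hkm
  have hkη : (0:ℝ) < (k:ℝ) - η := by
    have : (η:ℝ) < k := by
      rw [hηdef]; exact_mod_cast hηk
    linarith
  refine ⟨η, hηk, hηm, ?_, ?_⟩
  · rcases Nat.eq_zero_or_pos η with h0 | h0
    · exact Or.inl h0
    · refine Or.inr ?_
      have hmin := Nat.find_min hP (m := η - 1) (by omega)
      push_neg at hmin
      have hη1m : η - 1 < m := by omega
      have hQ' := hmin (by omega)
      rw [idxVal, dif_pos hη1m] at hQ' ⊢
      have hts := tailSum_succ σ hη1m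
      rw [show η - 1 + 1 = η from by omega] at hts
      rw [hts] at hQ'
      have hc : ((k:ℝ) - (η-1:ℕ)) = (k:ℝ) - η + 1 := by
        push_cast [Nat.cast_sub (by omega : 1 ≤ η)]; ring
      rw [hc] at hQ'
      rw [div_lt_iff₀ hkη]
      nlinarith [hQ']
  · rw [le_div_iff₀ hkη]
    linarith [hQ]


lemma sum_split_eta {m η : ℕ} (f : Fin m → ℝ) :
    ∑ i : Fin m, f i =
      (∑ i ∈ Finset.univ.filter (fun i : Fin m => (i : ℕ) < η), f i) +
      (∑ i ∈ Finset.univ.filter (fun i : Fin m => η ≤ (i : ℕ)), f i) := by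
  rw [← Finset.sum_filter_add_sum_filter_not Finset.univ (fun i : Fin m => (i:ℕ) < η) f]
  congr 1
  apply Finset.sum_congr _ (fun _ _ => rfl)
  apply Finset.filter_congr
  intro i _
  simp only [not_lt]

lemma sum_le_envVal {m k : ℕ} {σ : Fin m → ℝ} {lam : ℝ} (hlam : 0 < lam)
    (hnn : ∀ i, 0 ≤ σ i) (hanti : ∀ i j : Fin m, i ≤ j → σ j ≤ σ i)
    {η : ℕ} (hη : isEnvIdx m k σ η) :
    ∑ i : Fin m, 1 / (σ i + lam) ≤ envVal m k lam σ η + ((m:ℝ) - (k:ℝ)) / lam := by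
  obtain ⟨hηk, hηm, -, hle⟩ := hη
  set p : ℝ := (k:ℝ) - η with hp
  set t : ℝ := tailSum m σ η with ht
  have hkle : η ≤ k := le_of_lt hηk
  have hp0 : 0 < p := by
    have : (η:ℝ) < k := by exact_mod_cast hηk
    simp only [hp]; linarith
  have hση : p * σ ⟨η, hηm⟩ ≤ t := by
    rw [le_div_iff₀ hp0] at hle
    rw [idxVal, dif_pos hηm] at hle
    linarith [hle]
  have ht0 : 0 ≤ t := tailSum_nonneg hnn η
  have htp : 0 < t + p * lam := by positivity
  have hbound : ∀ i ∈ Finset.univ.filter (fun i : Fin m => η ≤ (i:ℕ)),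
      1 / (σ i + lam) ≤ 1 / lam - σ i * p / (lam * (t + p * lam)) := by
    intro i hi
    simp only [Finset.mem_filter, Finset.mem_univ, true_and] at hi
    have hσi : σ i ≤ σ ⟨η, hηm⟩ := hanti _ _ (by exact hi)
    exact chord hlam (hnn i) hp0 (le_trans (by nlinarith) hση)
  have hsum := Finset.sum_le_sum hbound
  rw [sum_split_eta (η := η) (fun i => 1 / (σ i + lam))]
  have hcard : ((Finset.univ.filter (fun i : Fin m => η ≤ (i:ℕ))).card : ℝ) = (m:ℝ) - η := by
    rw [card_tail_filter]
    push_cast [Nat.cast_sub (le_of_lt hηm)]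
    ring
  have hsum2 : ∑ i ∈ Finset.univ.filter (fun i : Fin m => η ≤ (i:ℕ)),
      (1 / lam - σ i * p / (lam * (t + p * lam)))
      = ((m:ℝ) - η) / lam - t * p / (lam * (t + p * lam)) := by
    rw [Finset.sum_sub_distrib, Finset.sum_const, nsmul_eq_mul, hcard, ← Finset.sum_div,
      ← Finset.sum_mul,
      show (∑ i ∈ Finset.univ.filter (fun i : Fin m => η ≤ (i:ℕ)), σ i) = t from ht.symm]
    ring
  rw [hsum2] at hsum
  have hfinal : ((m:ℝ) - η) / lam - t * p / (lam * (t + p * lam))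
      = p ^ 2 / (t + p * lam) + ((m:ℝ) - (k:ℝ)) / lam := by
    have h1 : ((m:ℝ) - η) = ((m:ℝ) - k) + p := by simp only [hp]; ring
    rw [h1]
    field_simp
    ring
  rw [hfinal] at hsum
  unfold envVal
  rw [← ht, ← hp]
  linarith [hsum]

lemma envVal_eq_sum {m : ℕ} {σ : Fin m → ℝ} {lam : ℝ} (hlam : 0 < lam)
    (hnn : ∀ i, 0 ≤ σ i) (hanti : ∀ i j : Fin m, i ≤ j → σ j ≤ σ i)
    {η : ℕ} (hη : isEnvIdx m m σ η) :
    envVal m m lam σ η = ∑ i : Fin m, 1 / (σ i + lam) := by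
  obtain ⟨hηk, hηm, -, hle⟩ := hη
  set p : ℝ := (m:ℝ) - η with hp
  set t : ℝ := tailSum m σ η with ht
  have hp0 : 0 < p := by
    have : (η:ℝ) < m := by exact_mod_cast hηm
    simp only [hp]; linarith
  have hση : p * σ ⟨η, hηm⟩ ≤ t := by
    rw [le_div_iff₀ hp0] at hle
    rw [idxVal, dif_pos hηm] at hle
    linarith [hle]
  have hcard : ((Finset.univ.filter (fun i : Fin m => η ≤ (i:ℕ))).card : ℝ) = p := by
    rw [card_tail_filter]
    push_cast [Nat.cast_sub (le_of_lt hηm)]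
    simp [hp]
  -- tail sum ≤ p * σ_η
  have hub : t ≤ p * σ ⟨η, hηm⟩ := by
    have : t ≤ ∑ i ∈ Finset.univ.filter (fun i : Fin m => η ≤ (i:ℕ)), σ ⟨η, hηm⟩ := by
      apply Finset.sum_le_sum
      intro i hi
      simp only [Finset.mem_filter, Finset.mem_univ, true_and] at hi
      exact hanti _ _ (by exact hi)
    rwa [Finset.sum_const, nsmul_eq_mul, hcard] at this
  have hteq : t = p * σ ⟨η, hηm⟩ := le_antisymm hub hση
  -- each tail element equals σ_η
  have hall : ∀ i ∈ Finset.univ.filter (fun i : Fin m => η ≤ (i:ℕ)), σ i = σ ⟨η, hηm⟩ := by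
    have hsums : ∑ i ∈ Finset.univ.filter (fun i : Fin m => η ≤ (i:ℕ)), σ i
        = ∑ i ∈ Finset.univ.filter (fun i : Fin m => η ≤ (i:ℕ)), σ ⟨η, hηm⟩ := by
      rw [Finset.sum_const, nsmul_eq_mul, hcard,
        show (∑ i ∈ Finset.univ.filter (fun i : Fin m => η ≤ (i:ℕ)), σ i) = t from ht.symm, hteq]
    intro i hi
    have := (Finset.sum_eq_sum_iff_of_le (fun i hi => by
      simp only [Finset.mem_filter, Finset.mem_univ, true_and] at hi
      exact hanti _ _ (by exact hi))).mp hsums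
    exact this i hi
  have hσsay : 0 < σ ⟨η, hηm⟩ + lam := by linarith [hnn ⟨η, hηm⟩]
  have hterm : p ^ 2 / (t + p * lam) = p / (σ ⟨η, hηm⟩ + lam) := by
    have h : t + p * lam = p * (σ ⟨η, hηm⟩ + lam) := by rw [hteq]; ring
    rw [h, pow_two, mul_div_mul_left _ _ (ne_of_gt hp0)]
  have htailsum : ∑ i ∈ Finset.univ.filter (fun i : Fin m => η ≤ (i:ℕ)), 1 / (σ i + lam)
      = p / (σ ⟨η, hηm⟩ + lam) := by
    rw [Finset.sum_congr rfl (fun i hi => by rw [hall i hi])]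
    rw [Finset.sum_const, nsmul_eq_mul, hcard, mul_one_div]
  unfold envVal
  rw [← ht, ← hp, hterm, ← htailsum, sum_split_eta (η := η) (fun i => 1 / (σ i + lam))]





lemma psd_smul {d : ℕ} {M : Matrix (Fin d) (Fin d) ℝ} (hM : M.PosSemidef) {c : ℝ} (hc : 0 ≤ c) :
    (c • M).PosSemidef := by
  refine ⟨?_, fun y => ?_⟩
  · unfold Matrix.IsHermitian
    rw [Matrix.conjTranspose_smul, hM.1]
    congr
  · exact (hM.smul hc).2 y

lemma psd_outer {d : ℕ} (v : Fin d → ℝ) : (Matrix.vecMulVec v v).PosSemidef := by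
  rw [Matrix.vecMulVec_eq (Fin 1)]
  have h : Matrix.replicateRow (Fin 1) v = (Matrix.replicateCol (Fin 1) v)ᴴ := by
    rw [Matrix.conjTranspose_replicateCol]
    congr
  rw [h]
  exact Matrix.posSemidef_self_mul_conjTranspose _

lemma psd_sum {d n : ℕ} (a : Fin n → Fin d → ℝ) (x : Fin n → ℝ) (hx : ∀ i, 0 ≤ x i) :
    (∑ i : Fin n, x i • Matrix.vecMulVec (a i) (a i)).PosSemidef := by
  induction (Finset.univ : Finset (Fin n)) using Finset.induction_on with
  | empty => simpa using Matrix.PosSemidef.zero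
  | insert _ _ hnotmem ih =>
    rw [Finset.sum_insert hnotmem]
    exact Matrix.PosSemidef.add (psd_smul (psd_outer _) (hx _)) ih

lemma eigsDesc_eq {d : ℕ} {X : Matrix (Fin d) (Fin d) ℝ} (hX : X.IsHermitian) :
    eigsDesc X = fun i => (hX.eigenvalues ∘ Tuple.sort hX.eigenvalues) i.rev := by
  unfold eigsDesc
  rw [dif_pos hX]

lemma eigsDesc_anti {d : ℕ} {X : Matrix (Fin d) (Fin d) ℝ} (hX : X.IsHermitian)
    {i j : Fin d} (hij : i ≤ j) : eigsDesc X j ≤ eigsDesc X i := by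
  rw [eigsDesc_eq hX]
  exact Tuple.monotone_sort hX.eigenvalues (Fin.rev_le_rev.mpr hij)

lemma eigsDesc_nonneg {d : ℕ} {X : Matrix (Fin d) (Fin d) ℝ} (hX : X.PosSemidef)
    (i : Fin d) : 0 ≤ eigsDesc X i := by
  rw [eigsDesc_eq hX.isHermitian]
  exact hX.eigenvalues_nonneg _

lemma sum_eigsDesc {d : ℕ} {X : Matrix (Fin d) (Fin d) ℝ} (hX : X.IsHermitian) (g : ℝ → ℝ) :
    ∑ i, g (eigsDesc X i) = ∑ i, g (hX.eigenvalues i) := by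
  rw [eigsDesc_eq hX]
  have h1 : ∑ i, g ((hX.eigenvalues ∘ Tuple.sort hX.eigenvalues) (Fin.revPerm i))
      = ∑ i, g ((hX.eigenvalues ∘ Tuple.sort hX.eigenvalues) i) :=
    Equiv.sum_comp Fin.revPerm (fun j => g ((hX.eigenvalues ∘ Tuple.sort hX.eigenvalues) j))
  have h2 : ∑ i, g (hX.eigenvalues (Tuple.sort hX.eigenvalues i))
      = ∑ i, g (hX.eigenvalues i) :=
    Equiv.sum_comp (Tuple.sort hX.eigenvalues) (fun j => g (hX.eigenvalues j))
  simp only [Function.comp_apply] at h1 h2 ⊢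
  rw [show (∑ i : Fin d, g (hX.eigenvalues (Tuple.sort hX.eigenvalues i.rev)))
      = ∑ i : Fin d, g (hX.eigenvalues (Tuple.sort hX.eigenvalues (Fin.revPerm i))) from rfl,
    h1, h2]

lemma trace_inv_eq {d : ℕ} {X : Matrix (Fin d) (Fin d) ℝ} (hX : X.IsHermitian) {lam : ℝ}
    (hpos : ∀ i, 0 < hX.eigenvalues i + lam) :
    Matrix.trace (X + lam • (1 : Matrix (Fin d) (Fin d) ℝ))⁻¹
      = ∑ i, 1 / (hX.eigenvalues i + lam) := by
  set U : Matrix (Fin d) (Fin d) ℝ := (hX.eigenvectorUnitary : Matrix (Fin d) (Fin d) ℝ) with hU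
  have hUU : U * star U = 1 := Matrix.mem_unitaryGroup_iff.mp hX.eigenvectorUnitary.2
  have hUU' : star U * U = 1 := Matrix.mem_unitaryGroup_iff'.mp hX.eigenvectorUnitary.2
  have hsp : X = U * Matrix.diagonal hX.eigenvalues * star U := by
    have h := hX.spectral_theorem
    have hD : Matrix.diagonal (RCLike.ofReal ∘ hX.eigenvalues)
        = Matrix.diagonal hX.eigenvalues := by
      congr 1
    rw [hD] at h
    exact h
  have h1 : lam • (1 : Matrix (Fin d) (Fin d) ℝ)
      = U * (lam • (1 : Matrix (Fin d) (Fin d) ℝ)) * star U := by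
    rw [Matrix.mul_smul, Matrix.mul_one, Matrix.smul_mul, hUU]
  have hXl : X + lam • (1 : Matrix (Fin d) (Fin d) ℝ)
      = U * Matrix.diagonal (fun i => hX.eigenvalues i + lam) * star U := by
    conv_lhs => rw [hsp, h1]
    rw [← Matrix.add_mul, ← Matrix.mul_add, Matrix.smul_one_eq_diagonal, Matrix.diagonal_add]
  have hinv : (X + lam • (1 : Matrix (Fin d) (Fin d) ℝ))⁻¹
      = U * Matrix.diagonal (fun i => (hX.eigenvalues i + lam)⁻¹) * star U := by
    apply Matrix.inv_eq_right_inv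
    rw [hXl]
    calc U * Matrix.diagonal (fun i => hX.eigenvalues i + lam) * star U *
          (U * Matrix.diagonal (fun i => (hX.eigenvalues i + lam)⁻¹) * star U)
        = U * (Matrix.diagonal (fun i => hX.eigenvalues i + lam) * (star U *
            (U * (Matrix.diagonal (fun i => (hX.eigenvalues i + lam)⁻¹) * star U)))) := by
          simp only [Matrix.mul_assoc]
      _ = U * (Matrix.diagonal (fun i => hX.eigenvalues i + lam) *
            (Matrix.diagonal (fun i => (hX.eigenvalues i + lam)⁻¹) * star U)) := by
          rw [← Matrix.mul_assoc (star U), hUU', one_mul]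
      _ = U * ((Matrix.diagonal (fun i => hX.eigenvalues i + lam) *
            Matrix.diagonal (fun i => (hX.eigenvalues i + lam)⁻¹)) * star U) := by
          simp only [Matrix.mul_assoc]
      _ = 1 := by
          rw [Matrix.diagonal_mul_diagonal]
          have h2 : (fun i => (hX.eigenvalues i + lam) * (hX.eigenvalues i + lam)⁻¹)
              = fun _ => (1:ℝ) := by
            funext i
            exact mul_inv_cancel₀ (ne_of_gt (hpos i))
          rw [h2, Matrix.diagonal_one, one_mul, hUU]
  rw [hinv, Matrix.trace_mul_comm, ← Matrix.mul_assoc, hUU', one_mul, Matrix.trace_diagonal]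
  simp [one_div]


lemma trace_contM {d n : ℕ} (a : Fin n → Fin d → ℝ) {lam : ℝ} (hlam : 0 < lam)
    (x : Fin n → ℝ) (hx : ∀ i, 0 ≤ x i) :
    Matrix.trace (contM d n a lam x)⁻¹
      = ∑ i, 1 / (eigsDesc (∑ i : Fin n, x i • Matrix.vecMulVec (a i) (a i)) i + lam) := by
  have hpsd := psd_sum a x hx
  have hpos : ∀ i, 0 < hpsd.1.eigenvalues i + lam := fun i => by
    have := hpsd.eigenvalues_nonneg i
    linarith
  unfold contM
  rw [trace_inv_eq hpsd.1 hpos]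
  exact (sum_eigsDesc hpsd.1 (fun s => 1 / (s + lam))).symm

lemma Gfun_eq {d kt : ℕ} {X : Matrix (Fin d) (Fin d) ℝ} (hpsd : X.PosSemidef)
    (hkt1 : 1 ≤ kt) (hktd : kt ≤ d) (lam : ℝ) :
    ∃ η, isEnvIdx d kt (eigsDesc X) η ∧ Gfun d kt lam X = envVal d kt lam (eigsDesc X) η := by
  have hex := exists_envIdx hkt1 hktd (eigsDesc X) (eigsDesc_nonneg hpsd)
  refine ⟨hex.choose, hex.choose_spec, ?_⟩
  unfold Gfun
  rw [dif_pos hex]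

end AuxProof15

theorem stmt15 (d n : ℕ) (hd : 1 ≤ d) (hdn : d ≤ n)
    (a : Fin n → Fin d → ℝ) (lam : ℝ) (hlam : 0 < lam)
    (k : ℕ) (hk1 : 1 ≤ k) (hkn : k ≤ n) :
    (d ≤ k → nuN d n a lam k = nuC d n a lam k) ∧
    (k < d → nuC d n a lam k ≤ nuN d n a lam k) := by
  constructor
  · -- Part (i): d ≤ k
    intro hdk
    have hmin : min k d = d := min_eq_right hdk
    have hval : ∀ x : Fin n → ℝ, (∀ i, 0 ≤ x i ∧ x i ≤ 1) →
        Gfun d (min k d) lam (∑ i : Fin n, x i • Matrix.vecMulVec (a i) (a i)) +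
          ((d : ℝ) - (min k d : ℕ)) / lam = Matrix.trace (contM d n a lam x)⁻¹ := by
      intro x hx
      have hx0 : ∀ i, 0 ≤ x i := fun i => (hx i).1
      have hpsd := psd_sum a x hx0
      rw [hmin]
      obtain ⟨η, hη, hG⟩ := Gfun_eq hpsd hd (le_refl d) lam
      rw [hG, envVal_eq_sum hlam (eigsDesc_nonneg hpsd)
        (fun i j hij => eigsDesc_anti hpsd.1 hij) hη]
      rw [trace_contM a hlam x hx0]
      simp
    unfold nuN nuC
    apply congrArg sInf
    ext r
    constructor
    · rintro ⟨x, hx1, hx2, hx3⟩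
      exact ⟨x, hx1, hx2, by rw [← hval x hx1]; exact hx3⟩
    · rintro ⟨x, hx1, hx2, hx3⟩
      exact ⟨x, hx1, hx2, by rw [hval x hx1]; exact hx3⟩
  · -- Part (ii): k < d
    intro hkd
    have hmin : min k d = k := min_eq_left (le_of_lt hkd)
    have hn1 : (0:ℝ) < (n:ℝ) := by
      have : 1 ≤ n := le_trans hd hdn
      exact_mod_cast Nat.lt_of_lt_of_le Nat.zero_lt_one this
    have hSCbdd : BddBelow {r : ℝ | ∃ x : Fin n → ℝ, (∀ i, 0 ≤ x i ∧ x i ≤ 1) ∧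
        (∑ i, x i) = (k : ℝ) ∧ Matrix.trace (contM d n a lam x)⁻¹ = r} := by
      refine ⟨0, fun r hr => ?_⟩
      obtain ⟨x, hx1, hx2, hx3⟩ := hr
      rw [← hx3, trace_contM a hlam x (fun i => (hx1 i).1)]
      apply Finset.sum_nonneg
      intro i _
      have h0 := eigsDesc_nonneg (psd_sum a x (fun i => (hx1 i).1)) i
      have : 0 < eigsDesc (∑ i : Fin n, x i • Matrix.vecMulVec (a i) (a i)) i + lam := by
        linarith
      positivity
    unfold nuN nuC
    rw [hmin]
    apply le_csInf
    · -- nonempty of the nuN feasible-value set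
      refine ⟨_, ⟨fun _ => (k:ℝ)/(n:ℝ), fun i => ⟨by positivity, ?_⟩, ?_, rfl⟩⟩
      · rw [div_le_one hn1]
        exact_mod_cast hkn
      · rw [Finset.sum_const, Finset.card_univ, Fintype.card_fin, nsmul_eq_mul,
          mul_div_cancel₀ _ (ne_of_gt hn1)]
    · rintro r ⟨x, hx1, hx2, hx3⟩
      have hx0 : ∀ i, 0 ≤ x i := fun i => (hx1 i).1
      have hpsd := psd_sum a x hx0
      obtain ⟨η, hη, hG⟩ := Gfun_eq hpsd hk1 (le_of_lt hkd) lam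
      have hchain : Matrix.trace (contM d n a lam x)⁻¹ ≤ r := by
        rw [← hx3, hG, trace_contM a hlam x hx0]
        exact sum_le_envVal hlam (eigsDesc_nonneg hpsd)
          (fun i j hij => eigsDesc_anti hpsd.1 hij) hη
      exact le_trans (csInf_le hSCbdd ⟨x, hx1, hx2, rfl⟩) hchain
end
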